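/- Let (X, 𝔸, d) be a C*-algebra-valued b-metric space with coefficient A, endowed with a directed graph G with V(G) = X whose edge set contains all loops, and let f, g : X → X be mappings satisfying d(fx, fy) ⪯ B(d(fx, gx) + d(fy, gy)) for all x, y ∈ X with (gx, gy) ∈ E(G̃), where B is a positive element of 𝔸 commuting with every element of 𝔸 and ‖BA‖ < 1/2. Suppose f(X) ⊆ g(X), g(X) is a complete subspace of X, and property (P1) holds. Then: (i) if C_{gf} ≠ ∅, then the set PC(f, g) of points of coincidence of f and g is nonempty; (ii) if moreover the graph G has property (P2), then PC(f, g) is a singleton; (iii) if in addition f and g are weakly compatible, then f and g have a unique common fixed point in X. -/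

import Mathlib

section aux
variable {𝔸 : Type*} [CStarAlgebra 𝔸] [PartialOrder 𝔸] [StarOrderedRing 𝔸]

/-- A central positive element times a positive element is positive. -/
lemma aux_central_mul_nonneg {B w : 𝔸} (hB : 0 ≤ B) (hBc : ∀ a : 𝔸, B * a = a * B)
    (hw : 0 ≤ w) : 0 ≤ B * w := by
  set s := CFC.sqrt w with hs
  have hss : s * s = w := CFC.sqrt_mul_sqrt_self w hw
  have hsa : star s = s := (IsSelfAdjoint.of_nonneg (CFC.sqrt_nonneg w)).star_eq
  have h := star_left_conjugate_nonneg hB s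
  rwa [hsa, ← hBc s, mul_assoc, hss] at h

lemma aux_norm_mul_le {A B x : 𝔸} (hA : IsSelfAdjoint A) (hB : 0 ≤ B)
    (hBc : ∀ a : 𝔸, B * a = a * B) (hx : 0 ≤ x) (hxB : x ≤ B) : ‖A * x‖ ≤ ‖A * B‖ := by
  have hxa : IsSelfAdjoint x := .of_nonneg hx
  set s := CFC.sqrt x with hs
  have hss : s * s = x := CFC.sqrt_mul_sqrt_self x hx
  have hsa : star s = s := (IsSelfAdjoint.of_nonneg (CFC.sqrt_nonneg x)).star_eq
  -- x * x ≤ B * x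
  have step1 : x * x ≤ B * x := by
    have lhs_eq : s * x * s = x * x := by rw [← hss]; simp only [mul_assoc]
    have rhs_eq : s * B * s = B * x := by rw [← hBc s, mul_assoc, hss]
    have h := star_left_conjugate_le_conjugate hxB s
    rwa [hsa, lhs_eq, rhs_eq] at h
  -- conjugate by A
  have step2 : A * (x * x) * A ≤ A * (B * x) * A := by
    have h := star_right_conjugate_le_conjugate step1 A
    rwa [hA.star_eq] at h
  have hnx : ‖x * A‖ = ‖A * x‖ := by
    rw [← norm_star, star_mul, hA.star_eq, hxa.star_eq]
  have e1 : ‖A * x‖ * ‖A * x‖ = ‖A * (x * x) * A‖ := by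
    have hst : star (x * A) * (x * A) = A * (x * x) * A := by
      rw [star_mul, hA.star_eq, hxa.star_eq]; simp [mul_assoc]
    rw [← hnx, ← CStarRing.norm_star_mul_self, hst]
  have pos1 : 0 ≤ A * (x * x) * A := by
    have := star_mul_self_nonneg (x * A)
    rwa [star_mul, hA.star_eq, hxa.star_eq, show A * x * (x * A) = A * (x * x) * A by
      simp [mul_assoc]] at this
  have e2 : ‖A * (x * x) * A‖ ≤ ‖A * (B * x) * A‖ :=
    CStarAlgebra.norm_le_norm_of_nonneg_of_le pos1 step2
  have e3 : ‖A * (B * x) * A‖ ≤ ‖A * B‖ * ‖A * x‖ := by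
    calc ‖A * (B * x) * A‖ = ‖(A * B) * (x * A)‖ := by rw [show A * (B * x) * A
            = (A * B) * (x * A) by simp [mul_assoc]]
      _ ≤ ‖A * B‖ * ‖x * A‖ := norm_mul_le _ _
      _ = ‖A * B‖ * ‖A * x‖ := by rw [hnx]
  have key : ‖A * x‖ * ‖A * x‖ ≤ ‖A * B‖ * ‖A * x‖ := by
    rw [e1]; exact e2.trans e3
  rcases (norm_nonneg (A * x)).eq_or_lt with h0 | h0
  · rw [← h0]; positivity
  · exact le_of_mul_le_mul_right key h0

lemma aux_norm_mul_le' {A B x w : 𝔸} (hA : IsSelfAdjoint A) (hB : 0 ≤ B)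
    (hBc : ∀ a : 𝔸, B * a = a * B) (hx : 0 ≤ x) (hw : 0 ≤ w) (hle : x ≤ B * w) :
    ‖A * x‖ ≤ ‖w‖ * ‖A * B‖ := by
  have hB' : (0 : 𝔸) ≤ ‖w‖ • B := smul_nonneg (norm_nonneg w) hB
  have hBc' : ∀ a : 𝔸, (‖w‖ • B) * a = a * (‖w‖ • B) := by
    intro a; rw [smul_mul_assoc, mul_smul_comm, hBc]
  have hw1 : w ≤ ‖w‖ • (1 : 𝔸) := by
    have := IsSelfAdjoint.le_algebraMap_norm_self (IsSelfAdjoint.of_nonneg hw)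
    rwa [Algebra.algebraMap_eq_smul_one] at this
  have hle' : x ≤ ‖w‖ • B := by
    refine hle.trans ?_
    have h0 : (0 : 𝔸) ≤ B * (‖w‖ • (1 : 𝔸) - w) :=
      aux_central_mul_nonneg hB hBc (sub_nonneg.2 hw1)
    rw [mul_sub, mul_smul_comm, mul_one] at h0
    exact sub_nonneg.mp h0
  have h := aux_norm_mul_le hA hB' hBc' hx hle'
  rwa [mul_smul_comm, norm_smul, Real.norm_of_nonneg (norm_nonneg w)] at h

end aux

/-- **Theorem 3.5.** Let `(X, 𝔸, d)` be a `C*`-algebra-valued `b`-metric space with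
coefficient `A`, endowed with a graph `G` (edge relation `E` containing all loops),
and let `f, g : X → X` satisfy
`d (f x) (f y) ⪯ B ⬝ (d (f x) (g x) + d (f y) (g y))` whenever `(g x, g y)` is an edge
of the symmetrized graph `G̃`, where `B` is a positive element of `𝔸` commuting with
every element of `𝔸` and `‖B ⬝ A‖ < 1/2`.  Suppose `f(X) ⊆ g(X)`, `g(X)` is a complete
subspace of `X`, and property (P1) holds.  Then:
(i) if `C_{gf} ≠ ∅` then the set `PC(f, g)` of points of coincidence is nonempty;
(ii) if moreover property (P2) holds then `PC(f, g)` is a singleton;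
(iii) if in addition `f` and `g` are weakly compatible then `f` and `g` have a unique
common fixed point. -/
theorem common_fixed_point_of_cstar_bmetric_graph_kannan_contraction
    {X : Type*} {𝔸 : Type*} [CStarAlgebra 𝔸] [PartialOrder 𝔸] [StarOrderedRing 𝔸]
    (d : X → X → 𝔸) (A : 𝔸)
    (hA_pos : 0 ≤ A) (hA_one : (1 : 𝔸) ≤ A)
    (hd_nonneg : ∀ x y, 0 ≤ d x y)
    (hd_eq_zero : ∀ x y, d x y = 0 ↔ x = y)
    (hd_symm : ∀ x y, d x y = d y x)
    (hd_triangle : ∀ x y z, d x y ≤ A * (d x z + d z y))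
    (E : X → X → Prop) (hE_refl : ∀ x, E x x)
    (f g : X → X) (B : 𝔸)
    (hB_pos : 0 ≤ B) (hB_central : ∀ a : 𝔸, B * a = a * B)
    (hcontr : ∀ x y, (E (g x) (g y) ∨ E (g y) (g x)) →
      d (f x) (f y) ≤ B * (d (f x) (g x) + d (f y) (g y)))
    (hnorm : ‖B * A‖ < 1 / 2)
    (hrange : Set.range f ⊆ Set.range g)
    -- `g(X)` is a complete subspace of `X`
    (hg_complete : ∀ s : ℕ → X, (∀ n, s n ∈ Set.range g) →
      (∀ ε : ℝ, 0 < ε → ∃ N, ∀ m ≥ N, ∀ n ≥ N, ‖d (s m) (s n)‖ < ε) →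
      ∃ p ∈ Set.range g, Filter.Tendsto (fun n => ‖d (s n) p‖) Filter.atTop (nhds 0))
    -- property (P1)
    (hP1 : ∀ (u : ℕ → X) (p : X),
      Filter.Tendsto (fun n => ‖d (g (u n)) p‖) Filter.atTop (nhds 0) →
      (∀ n, E (g (u n)) (g (u (n + 1))) ∨ E (g (u (n + 1))) (g (u n))) →
      ∃ φ : ℕ → ℕ, StrictMono φ ∧ ∀ i, E (g (u (φ i))) p ∨ E p (g (u (φ i))))
    -- `C_{gf} ≠ ∅`
    (hC : ∃ u : ℕ → X, (∀ n, g (u (n + 1)) = f (u n)) ∧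
      ∀ m n, E (g (u m)) (g (u n)) ∨ E (g (u n)) (g (u m))) :
    (∃ y x, f x = y ∧ g x = y) ∧
    -- property (P2) gives uniqueness of the point of coincidence
    ((∀ y₁ y₂, (∃ x, f x = y₁ ∧ g x = y₁) → (∃ x, f x = y₂ ∧ g x = y₂) →
        (E y₁ y₂ ∨ E y₂ y₁)) →
      (∃! y, ∃ x, f x = y ∧ g x = y) ∧
      -- weak compatibility gives a unique common fixed point
      ((∀ x, f x = g x → f (g x) = g (f x)) → ∃! z, f z = z ∧ g z = z)) := by
  classical
  obtain ⟨u, hu, hedge⟩ := hC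
  have hAsa : IsSelfAdjoint A := .of_nonneg hA_pos
  have hAB : ‖A * B‖ < 1 / 2 := by rw [← hB_central A]; exact hnorm
  have hABnn : (0 : ℝ) ≤ ‖A * B‖ := norm_nonneg _
  -- ‖B‖ < 1/2
  have hBA_sub : (0 : 𝔸) ≤ B * (A - 1) :=
    aux_central_mul_nonneg hB_pos hB_central (sub_nonneg.2 hA_one)
  have hB_le_BA : B ≤ B * A := by
    rw [mul_sub, mul_one] at hBA_sub; exact sub_nonneg.mp hBA_sub
  have hb : ‖B‖ < 1 / 2 :=
    lt_of_le_of_lt (CStarAlgebra.norm_le_norm_of_nonneg_of_le hB_pos hB_le_BA) hnorm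
  have hb0 : (0 : ℝ) ≤ ‖B‖ := norm_nonneg B
  have h1b : (0 : ℝ) < 1 - ‖B‖ := by linarith
  set lam := ‖B‖ / (1 - ‖B‖) with hlamdef
  have hlam0 : 0 ≤ lam := div_nonneg hb0 h1b.le
  have hlam1 : lam < 1 := by rw [hlamdef, div_lt_one h1b]; linarith
  set D : ℕ → 𝔸 := fun n => d (g (u (n + 1))) (g (u n)) with hD
  have hDnn : ∀ n, 0 ≤ D n := fun n => hd_nonneg _ _
  have hDcontr : ∀ n, D (n + 1) ≤ B * (D (n + 1) + D n) := by
    intro n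
    have h := hcontr (u (n + 1)) (u n) (hedge (n + 1) n)
    rw [← hu (n + 1), ← hu n] at h
    simp only [hD]
    exact h
  have hDnorm : ∀ n, ‖D (n + 1)‖ ≤ lam * ‖D n‖ := by
    intro n
    have h1 : ‖D (n + 1)‖ ≤ ‖B * (D (n + 1) + D n)‖ :=
      CStarAlgebra.norm_le_norm_of_nonneg_of_le (hDnn _) (hDcontr n)
    have h2 : ‖B * (D (n + 1) + D n)‖ ≤ ‖B‖ * (‖D (n + 1)‖ + ‖D n‖) :=
      (norm_mul_le _ _).trans (mul_le_mul_of_nonneg_left (norm_add_le _ _) hb0)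
    have h3 : ‖D (n + 1)‖ ≤ ‖B‖ * (‖D (n + 1)‖ + ‖D n‖) := h1.trans h2
    rw [hlamdef, div_mul_eq_mul_div, le_div_iff₀ h1b]
    nlinarith [norm_nonneg (D n), norm_nonneg (D (n + 1))]
  have hDgeo : ∀ n, ‖D n‖ ≤ lam ^ n * ‖D 0‖ := by
    intro n
    induction n with
    | zero => simp
    | succ k ih =>
      calc ‖D (k + 1)‖ ≤ lam * ‖D k‖ := hDnorm k
        _ ≤ lam * (lam ^ k * ‖D 0‖) := mul_le_mul_of_nonneg_left ih hlam0
        _ = lam ^ (k + 1) * ‖D 0‖ := by ring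
  have hpair : ∀ m n : ℕ, ‖d (g (u (m + 1))) (g (u (n + 1)))‖ ≤
      ‖B‖ * (lam ^ m * ‖D 0‖ + lam ^ n * ‖D 0‖) := by
    intro m n
    have h := hcontr (u m) (u n) (hedge m n)
    rw [← hu m, ← hu n] at h
    have h' : d (g (u (m + 1))) (g (u (n + 1))) ≤ B * (D m + D n) := by
      simp only [hD]; exact h
    calc ‖d (g (u (m + 1))) (g (u (n + 1)))‖ ≤ ‖B * (D m + D n)‖ :=
          CStarAlgebra.norm_le_norm_of_nonneg_of_le (hd_nonneg _ _) h'
      _ ≤ ‖B‖ * (‖D m‖ + ‖D n‖) :=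
          (norm_mul_le _ _).trans (mul_le_mul_of_nonneg_left (norm_add_le _ _) hb0)
      _ ≤ ‖B‖ * (lam ^ m * ‖D 0‖ + lam ^ n * ‖D 0‖) :=
          mul_le_mul_of_nonneg_left (add_le_add (hDgeo m) (hDgeo n)) hb0
  have hcauchy : ∀ ε : ℝ, 0 < ε → ∃ N, ∀ m ≥ N, ∀ n ≥ N,
      ‖d (g (u m)) (g (u n))‖ < ε := by
    intro ε hε
    have h0 := tendsto_pow_atTop_nhds_zero_of_lt_one hlam0 hlam1
    have htend : Filter.Tendsto
        (fun N => ‖B‖ * (lam ^ N * ‖D 0‖ + lam ^ N * ‖D 0‖))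
        Filter.atTop (nhds 0) := by
      have := ((h0.mul_const ‖D 0‖).add (h0.mul_const ‖D 0‖)).const_mul ‖B‖
      simpa using this
    obtain ⟨N, hN⟩ := Filter.eventually_atTop.mp (htend.eventually_lt_const hε)
    refine ⟨N + 1, ?_⟩
    intro m hm n hn
    obtain ⟨m', rfl⟩ : ∃ m', m = m' + 1 := ⟨m - 1, by omega⟩
    obtain ⟨n', rfl⟩ : ∃ n', n = n' + 1 := ⟨n - 1, by omega⟩
    have hm' : N ≤ m' := by omega
    have hn' : N ≤ n' := by omega
    have hk : ∀ k, N ≤ k → lam ^ k ≤ lam ^ N := fun k hk =>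
      pow_le_pow_of_le_one hlam0 hlam1.le hk
    have hDnn0 : (0 : ℝ) ≤ ‖D 0‖ := norm_nonneg _
    have h2 : ‖B‖ * (lam ^ m' * ‖D 0‖ + lam ^ n' * ‖D 0‖) ≤
        ‖B‖ * (lam ^ N * ‖D 0‖ + lam ^ N * ‖D 0‖) :=
      mul_le_mul_of_nonneg_left
        (add_le_add (mul_le_mul_of_nonneg_right (hk _ hm') hDnn0)
          (mul_le_mul_of_nonneg_right (hk _ hn') hDnn0)) hb0
    exact lt_of_le_of_lt ((hpair m' n').trans h2) (hN N le_rfl)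
  obtain ⟨p, hp_mem, htendp⟩ := hg_complete (fun n => g (u n)) (fun n => ⟨u n, rfl⟩) hcauchy
  obtain ⟨v, hv⟩ := hp_mem
  obtain ⟨φ, hφ, hφedge⟩ := hP1 u p htendp (fun n => hedge n (n + 1))
  -- key estimate
  have hkey : ∀ i, ‖d (f v) (g v)‖ ≤
      ‖A * B‖ * (‖d (f v) (g v)‖ + ‖D (φ i)‖) + ‖A‖ * ‖d (g (u (φ i + 1))) p‖ := by
    intro i
    have hedge' : E (g v) (g (u (φ i))) ∨ E (g (u (φ i))) (g v) := by
      rcases hφedge i with h | h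
      · rw [← hv] at h; exact Or.inr h
      · rw [← hv] at h; exact Or.inl h
    have hcon := hcontr v (u (φ i)) hedge'
    rw [← hu (φ i)] at hcon
    have hcon' : d (f v) (g (u (φ i + 1))) ≤ B * (d (f v) (g v) + D (φ i)) := by
      simp only [hD]; exact hcon
    have hwnn : 0 ≤ d (f v) (g v) + D (φ i) := add_nonneg (hd_nonneg _ _) (hDnn _)
    have htri := hd_triangle (f v) (g v) (g (u (φ i + 1)))
    rw [mul_add] at htri
    have hn1 : ‖d (f v) (g v)‖ ≤
        ‖A * d (f v) (g (u (φ i + 1))) + A * d (g (u (φ i + 1))) (g v)‖ :=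
      CStarAlgebra.norm_le_norm_of_nonneg_of_le (hd_nonneg _ _) htri
    have hn2 : ‖A * d (f v) (g (u (φ i + 1)))‖ ≤ ‖d (f v) (g v) + D (φ i)‖ * ‖A * B‖ :=
      aux_norm_mul_le' hAsa hB_pos hB_central (hd_nonneg _ _) hwnn hcon'
    have hn3 : ‖A * d (g (u (φ i + 1))) (g v)‖ ≤ ‖A‖ * ‖d (g (u (φ i + 1))) p‖ := by
      rw [hv]; exact norm_mul_le _ _
    have hwle : ‖d (f v) (g v) + D (φ i)‖ ≤ ‖d (f v) (g v)‖ + ‖D (φ i)‖ := norm_add_le _ _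
    have hmul := mul_le_mul_of_nonneg_right hwle hABnn
    calc ‖d (f v) (g v)‖ ≤
        ‖A * d (f v) (g (u (φ i + 1)))‖ + ‖A * d (g (u (φ i + 1))) (g v)‖ :=
          hn1.trans (norm_add_le _ _)
      _ ≤ ‖d (f v) (g v) + D (φ i)‖ * ‖A * B‖ + ‖A‖ * ‖d (g (u (φ i + 1))) p‖ :=
          add_le_add hn2 hn3
      _ ≤ ‖A * B‖ * (‖d (f v) (g v)‖ + ‖D (φ i)‖) + ‖A‖ * ‖d (g (u (φ i + 1))) p‖ := by
          rw [mul_comm (‖A * B‖)]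
          exact add_le_add hmul le_rfl
  -- limits
  have hDlim : Filter.Tendsto (fun i => ‖D (φ i)‖) Filter.atTop (nhds 0) := by
    apply squeeze_zero (fun i => norm_nonneg _)
      (g := fun i => lam ^ i * ‖D 0‖)
      (fun i => (hDgeo (φ i)).trans
        (mul_le_mul_of_nonneg_right
          (pow_le_pow_of_le_one hlam0 hlam1.le hφ.le_apply) (norm_nonneg _)))
    simpa using (tendsto_pow_atTop_nhds_zero_of_lt_one hlam0 hlam1).mul_const ‖D 0‖
  have hφ1 : Filter.Tendsto (fun i => φ i + 1) Filter.atTop Filter.atTop :=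
    Filter.tendsto_atTop_mono (fun i => (hφ.le_apply).trans (Nat.le_succ _))
      Filter.tendsto_id
  have hplim : Filter.Tendsto (fun i => ‖d (g (u (φ i + 1))) p‖) Filter.atTop (nhds 0) :=
    htendp.comp hφ1
  have hrhs : Filter.Tendsto
      (fun i => ‖A * B‖ * (‖d (f v) (g v)‖ + ‖D (φ i)‖) + ‖A‖ * ‖d (g (u (φ i + 1))) p‖)
      Filter.atTop (nhds (‖A * B‖ * (‖d (f v) (g v)‖ + 0) + ‖A‖ * 0)) :=
    ((tendsto_const_nhds.add hDlim).const_mul _).add (hplim.const_mul _)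
  have hδle : ‖d (f v) (g v)‖ ≤ ‖A * B‖ * (‖d (f v) (g v)‖ + 0) + ‖A‖ * 0 :=
    ge_of_tendsto hrhs (Filter.Eventually.of_forall hkey)
  have hδ0 : ‖d (f v) (g v)‖ = 0 := by
    have h1 : ‖d (f v) (g v)‖ ≤ ‖A * B‖ * ‖d (f v) (g v)‖ := by simpa using hδle
    have h2 : (0 : ℝ) ≤ ‖d (f v) (g v)‖ := norm_nonneg _
    have h3 : ‖A * B‖ * ‖d (f v) (g v)‖ ≤ (1 / 2) * ‖d (f v) (g v)‖ :=
      mul_le_mul_of_nonneg_right hAB.le h2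
    linarith
  have hfv : f v = g v := (hd_eq_zero _ _).mp (norm_eq_zero.mp hδ0)
  have hPCv : ∃ x, f x = f v ∧ g x = f v := ⟨v, rfl, hfv.symm⟩
  refine ⟨⟨f v, hPCv⟩, ?_⟩
  intro hP2
  have huniq : ∀ y₁ y₂, (∃ x, f x = y₁ ∧ g x = y₁) → (∃ x, f x = y₂ ∧ g x = y₂) →
      y₁ = y₂ := by
    intro y₁ y₂ h₁ h₂
    obtain ⟨x₁, hf₁, hg₁⟩ := h₁
    obtain ⟨x₂, hf₂, hg₂⟩ := h₂
    have he : E (g x₁) (g x₂) ∨ E (g x₂) (g x₁) := by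
      rw [hg₁, hg₂]
      exact hP2 y₁ y₂ ⟨x₁, hf₁, hg₁⟩ ⟨x₂, hf₂, hg₂⟩
    have h := hcontr x₁ x₂ he
    have hz1 : d (f x₁) (g x₁) = 0 := by rw [hf₁, hg₁]; exact (hd_eq_zero _ _).mpr rfl
    have hz2 : d (f x₂) (g x₂) = 0 := by rw [hf₂, hg₂]; exact (hd_eq_zero _ _).mpr rfl
    rw [hz1, hz2, add_zero, mul_zero] at h
    have hle0 : d y₁ y₂ ≤ 0 := by rw [← hf₁, ← hf₂]; exact h
    exact (hd_eq_zero _ _).mp (le_antisymm hle0 (hd_nonneg _ _))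
  refine ⟨⟨f v, hPCv, fun y hy => huniq y (f v) hy hPCv⟩, ?_⟩
  intro hwc
  have hcm := hwc v hfv
  have hfy : f (f v) = g (f v) := (congrArg f hfv).trans hcm
  have hPC2 : ∃ x, f x = f (f v) ∧ g x = f (f v) := ⟨f v, rfl, hfy.symm⟩
  have hff : f (f v) = f v := huniq (f (f v)) (f v) hPC2 hPCv
  refine ⟨f v, ⟨hff, hfy.symm.trans hff⟩, fun z hz => huniq z (f v) ⟨z, hz.1, hz.2⟩ hPCv⟩
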